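/- Let φ be holomorphic and univalent on the right half-plane H with |φ″(v)/φ′(v)| ≤ 4/Re v on H. Then there exists C₁ > 0 such that for all real v ≥ 1, ∫_v^∞ e^{−t}|φ′(t)| dt ≤ C₁ e^{−v} |φ′(v)|. -/

import Mathlib

open MeasureTheory

/-- If `φ` is holomorphic and univalent on the right half-plane with
`|φ''/φ'| ≤ 4/Re v` there, then there is `C₁ > 0` such that for all real `v ≥ 1`,
`∫_v^∞ e^{-t} |φ'(t)| dt ≤ C₁ e^{-v} |φ'(v)|`. -/
theorem stmt11 (φ : ℂ → ℂ)
    (hφd : DifferentiableOn ℂ φ {v : ℂ | 0 < v.re})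
    (hφi : Set.InjOn φ {v : ℂ | 0 < v.re})
    (hb : ∀ v ∈ {v : ℂ | 0 < v.re}, ‖deriv (deriv φ) v / deriv φ v‖ ≤ 4 / v.re) :
    ∃ C₁ : ℝ, 0 < C₁ ∧ ∀ v : ℝ, 1 ≤ v →
      ∫ t in Set.Ioi v, Real.exp (-t) * ‖deriv φ ((t : ℝ) : ℂ)‖ ≤
        C₁ * Real.exp (-v) * ‖deriv φ ((v : ℝ) : ℂ)‖ := by
  have hSo : IsOpen {v : ℂ | 0 < v.re} := isOpen_lt continuous_const Complex.continuous_re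
  have hA : AnalyticOnNhd ℂ φ {v : ℂ | 0 < v.re} := hφd.analyticOnNhd hSo
  -- the real-restricted first derivative has derivative the second derivative
  have hder : ∀ x : ℝ, 0 < x →
      HasDerivAt (fun y : ℝ => deriv φ (y : ℂ)) (deriv (deriv φ) ((x : ℝ) : ℂ)) x := by
    intro x hx
    have hmem : ((x : ℝ) : ℂ) ∈ {v : ℂ | 0 < v.re} := by simpa using hx
    exact ((hA.deriv _ hmem).differentiableAt.hasDerivAt).comp_ofReal
  -- the second derivative bound at real points where the first derivative is nonzero
  have hb' : ∀ x : ℝ, 0 < x → deriv φ ((x : ℝ) : ℂ) ≠ 0 →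
      ‖deriv (deriv φ) ((x : ℝ) : ℂ)‖ ≤ 4 / x * ‖deriv φ ((x : ℝ) : ℂ)‖ := by
    intro x hx hne
    have hmem : ((x : ℝ) : ℂ) ∈ {v : ℂ | 0 < v.re} := by simpa using hx
    have h := hb _ hmem
    rw [Complex.ofReal_re, norm_div, div_le_iff₀ (norm_pos_iff.mpr hne)] at h
    exact h
  -- key growth bound: ‖φ'(t)‖ ≤ ‖φ'(v)‖ * t^4 / v^4 for 1 ≤ v ≤ t
  have key : ∀ v : ℝ, 1 ≤ v → ∀ t : ℝ, v ≤ t →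
      ‖deriv φ ((t : ℝ) : ℂ)‖ ≤ ‖deriv φ ((v : ℝ) : ℂ)‖ * t ^ 4 / v ^ 4 := by
    intro v hv t ht
    have hv0 : (0:ℝ) < v := lt_of_lt_of_le one_pos hv
    have hv4 : (0:ℝ) < v ^ 4 := by positivity
    set n : ℝ := ‖deriv φ ((v : ℝ) : ℂ)‖ with hn
    have hn0 : 0 ≤ n := norm_nonneg _
    -- for every ε > 0 we have the perturbed bound
    have hstep : ∀ ε : ℝ, 0 < ε →
        ‖deriv φ ((t : ℝ) : ℂ)‖ ≤ (n + ε) * (t ^ 4 * Real.exp (ε * (t - v))) / v ^ 4 := by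
      intro ε hε
      set c : ℝ := n + ε with hc
      have hc0 : 0 < c := by positivity
      set B : ℝ → ℝ := fun x => c * (x ^ 4 * Real.exp (ε * (x - v))) / v ^ 4 with hB
      set B' : ℝ → ℝ := fun x =>
        c * (4 * x ^ 3 * Real.exp (ε * (x - v))
          + x ^ 4 * (Real.exp (ε * (x - v)) * (ε * 1))) / v ^ 4 with hB'
      have hBd : ∀ x : ℝ, HasDerivAt B (B' x) x := by
        intro x
        have hE : HasDerivAt (fun x : ℝ => Real.exp (ε * (x - v)))
            (Real.exp (ε * (x - v)) * (ε * 1)) x :=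
          (((hasDerivAt_id x).sub_const v).const_mul ε).exp
        have hx4 : HasDerivAt (fun x : ℝ => x ^ 4) (4 * x ^ 3) x := by
          simpa using hasDerivAt_pow 4 x
        have := ((hx4.mul hE).const_mul c).div_const (v ^ 4)
        convert this using 1
        · rfl
        · rfl
        · rfl
      have hmvt := image_norm_le_of_norm_deriv_right_lt_deriv_boundary
        (f := fun x : ℝ => deriv φ ((x : ℝ) : ℂ))
        (f' := fun x : ℝ => deriv (deriv φ) ((x : ℝ) : ℂ))
        (a := v) (b := t)
        (fun x hx => ((hder x (by linarith [hx.1])).continuousAt).continuousWithinAt)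
        (fun x hx => (hder x (by linarith [hx.1])).hasDerivWithinAt)
        (B := B) (B' := B')
        (by
          have : B v = c := by
            simp only [B, sub_self, mul_zero, Real.exp_zero, mul_one]
            field_simp
          rw [this, hc]
          exact le_add_of_nonneg_right hε.le)
        hBd
        (by
          intro x hx heq0
          have heq : ‖deriv φ ((x : ℝ) : ℂ)‖ = B x := heq0
          have hx0 : (0:ℝ) < x := by linarith [hx.1]
          have hBpos : 0 < B x := by
            have := Real.exp_pos (ε * (x - v))
            positivity
          have hne : deriv φ ((x : ℝ) : ℂ) ≠ 0 := by
            intro h0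
            rw [h0, norm_zero] at heq
            exact hBpos.ne' heq.symm
          have h1 := hb' x hx0 hne
          rw [heq] at h1
          refine lt_of_le_of_lt h1 ?_
          have hE : 0 < Real.exp (ε * (x - v)) := Real.exp_pos _
          show 4 / x * (c * (x ^ 4 * Real.exp (ε * (x - v))) / v ^ 4)
              < c * (4 * x ^ 3 * Real.exp (ε * (x - v))
                + x ^ 4 * (Real.exp (ε * (x - v)) * (ε * 1))) / v ^ 4
          have hstrict : c * (4 * x ^ 3 * Real.exp (ε * (x - v)))
              < c * (4 * x ^ 3 * Real.exp (ε * (x - v))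
                + x ^ 4 * (Real.exp (ε * (x - v)) * (ε * 1))) := by
            have : 0 < x ^ 4 * (Real.exp (ε * (x - v)) * (ε * 1)) := by positivity
            nlinarith
          have e1 : 4 / x * (c * (x ^ 4 * Real.exp (ε * (x - v))) / v ^ 4)
              = c * (4 * x ^ 3 * Real.exp (ε * (x - v))) / v ^ 4 := by
            field_simp
          rw [e1]
          exact div_lt_div_of_pos_right hstrict hv4)
      exact hmvt ⟨ht, le_refl t⟩
    -- take ε → 0⁺
    have htend : Filter.Tendsto
        (fun ε : ℝ => (n + ε) * (t ^ 4 * Real.exp (ε * (t - v))) / v ^ 4)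
        (nhdsWithin 0 (Set.Ioi 0)) (nhds (n * t ^ 4 / v ^ 4)) := by
      have hcont : Continuous
          (fun ε : ℝ => (n + ε) * (t ^ 4 * Real.exp (ε * (t - v))) / v ^ 4) := by
        fun_prop
      have h := (hcont.tendsto 0).mono_left (nhdsWithin_le_nhds (s := Set.Ioi (0:ℝ)))
      simpa using h
    refine ge_of_tendsto htend ?_
    filter_upwards [self_mem_nhdsWithin] with ε hε
    exact hstep ε hε
  -- now the integral estimate with C₁ = 65
  refine ⟨65, by norm_num, ?_⟩
  intro v hv
  have hv0 : (0:ℝ) < v := lt_of_lt_of_le one_pos hv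
  have hv4 : (0:ℝ) < v ^ 4 := by positivity
  set n : ℝ := ‖deriv φ ((v : ℝ) : ℂ)‖ with hn
  have hn0 : 0 ≤ n := norm_nonneg _
  -- explicit antiderivative of t^4 e^{-t}
  set F : ℝ → ℝ := fun t =>
    -((t ^ 4 + 4 * t ^ 3 + 12 * t ^ 2 + 24 * t + 24) * Real.exp (-t)) with hF
  have hFd : ∀ x : ℝ, HasDerivAt F (x ^ 4 * Real.exp (-x)) x := by
    intro x
    have hE : HasDerivAt (fun t : ℝ => Real.exp (-t)) (Real.exp (-x) * (-1)) x :=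
      (hasDerivAt_neg x).exp
    have hp : HasDerivAt (fun t : ℝ => t ^ 4 + 4 * t ^ 3 + 12 * t ^ 2 + 24 * t + 24)
        (4 * x ^ 3 + 4 * (3 * x ^ 2) + 12 * (2 * x) + 24) x := by
      have h1 : HasDerivAt (fun t : ℝ => t ^ 4) (4 * x ^ 3) x := by
        simpa using hasDerivAt_pow 4 x
      have h2 : HasDerivAt (fun t : ℝ => 4 * t ^ 3) (4 * (3 * x ^ 2)) x := by
        simpa using (hasDerivAt_pow 3 x).const_mul (4:ℝ)
      have h3 : HasDerivAt (fun t : ℝ => 12 * t ^ 2) (12 * (2 * x)) x := by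
        simpa using (hasDerivAt_pow 2 x).const_mul (12:ℝ)
      have h4 : HasDerivAt (fun t : ℝ => 24 * t) 24 x := by
        simpa using (hasDerivAt_id x).const_mul (24:ℝ)
      exact (((h1.add h2).add h3).add h4).add_const 24
    have := (hp.mul hE).neg
    convert this using 1
    · rfl
    · rfl
    · rfl
    · ring
  have hFtop : Filter.Tendsto F Filter.atTop (nhds 0) := by
    have h4 := Real.tendsto_pow_mul_exp_neg_atTop_nhds_zero 4
    have h3 := (Real.tendsto_pow_mul_exp_neg_atTop_nhds_zero 3).const_mul (4:ℝ)
    have h2 := (Real.tendsto_pow_mul_exp_neg_atTop_nhds_zero 2).const_mul (12:ℝ)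
    have h1 := (Real.tendsto_pow_mul_exp_neg_atTop_nhds_zero 1).const_mul (24:ℝ)
    have h0 := (Real.tendsto_pow_mul_exp_neg_atTop_nhds_zero 0).const_mul (24:ℝ)
    have hsum := ((((h4.add h3).add h2).add h1).add h0).neg
    have heq : F = fun t : ℝ =>
        -(t ^ 4 * Real.exp (-t) + 4 * (t ^ 3 * Real.exp (-t))
          + 12 * (t ^ 2 * Real.exp (-t)) + 24 * (t ^ 1 * Real.exp (-t))
          + 24 * (t ^ 0 * Real.exp (-t))) := by
      funext t
      simp only [F, pow_one, pow_zero, one_mul]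
      ring
    rw [heq]
    simpa using hsum
  have hInt : IntegrableOn (fun t : ℝ => t ^ 4 * Real.exp (-t)) (Set.Ioi v) :=
    integrableOn_Ioi_deriv_of_nonneg' (fun x _ => hFd x)
      (fun x _ => by positivity) hFtop
  have hval : ∫ x in Set.Ioi v, x ^ 4 * Real.exp (-x) = 0 - F v :=
    integral_Ioi_of_hasDerivAt_of_nonneg' (fun x _ => hFd x)
      (fun x _ => by positivity) hFtop
  set G : ℝ → ℝ := fun t => Real.exp (-t) * ‖deriv φ ((t : ℝ) : ℂ)‖ with hG
  have hdom : ∀ t ∈ Set.Ioi v, G t ≤ n / v ^ 4 * (t ^ 4 * Real.exp (-t)) := by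
    intro t ht
    have htv : v ≤ t := (Set.mem_Ioi.mp ht).le
    calc G t ≤ Real.exp (-t) * (n * t ^ 4 / v ^ 4) :=
          mul_le_mul_of_nonneg_left (key v hv t htv) (Real.exp_pos _).le
      _ = n / v ^ 4 * (t ^ 4 * Real.exp (-t)) := by ring
  have hGcont : ContinuousOn G (Set.Ioi v) := by
    intro x hx
    have hx0 : (0:ℝ) < x := lt_trans hv0 (Set.mem_Ioi.mp hx)
    exact (((Real.continuous_exp.comp continuous_neg).continuousAt).mul
      ((hder x hx0).continuousAt.norm)).continuousWithinAt
  have hGmeas : AEStronglyMeasurable G (volume.restrict (Set.Ioi v)) :=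
    hGcont.aestronglyMeasurable measurableSet_Ioi
  have hGint : IntegrableOn G (Set.Ioi v) := by
    refine Integrable.mono (hInt.const_mul (n / v ^ 4)) hGmeas ?_
    refine (ae_restrict_iff' measurableSet_Ioi).mpr (Filter.Eventually.of_forall ?_)
    intro t ht
    have h1 : 0 ≤ G t := by
      simp only [G]
      positivity
    have h2 : (0:ℝ) ≤ n / v ^ 4 * (t ^ 4 * Real.exp (-t)) := by
      have htv : (0:ℝ) < t := lt_trans hv0 (Set.mem_Ioi.mp ht)
      positivity
    rw [Real.norm_of_nonneg h1, Real.norm_of_nonneg h2]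
    exact hdom t ht
  have hmono : ∫ t in Set.Ioi v, G t
      ≤ ∫ t in Set.Ioi v, n / v ^ 4 * (t ^ 4 * Real.exp (-t)) :=
    setIntegral_mono_on hGint (hInt.const_mul (n / v ^ 4)) measurableSet_Ioi hdom
  have hcalc : ∫ t in Set.Ioi v, n / v ^ 4 * (t ^ 4 * Real.exp (-t))
      = n / v ^ 4 * (0 - F v) := by
    rw [MeasureTheory.integral_const_mul, hval]
  have hP : v ^ 4 + 4 * v ^ 3 + 12 * v ^ 2 + 24 * v + 24 ≤ 65 * v ^ 4 := by
    nlinarith [pow_pos hv0 2, pow_pos hv0 3, sq_nonneg (v - 1), sq_nonneg v,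
      mul_le_mul_of_nonneg_left hv (le_of_lt hv0),
      mul_le_mul_of_nonneg_left (mul_le_mul_of_nonneg_left hv (le_of_lt hv0)) (le_of_lt hv0)]
  have hfinal : n / v ^ 4 * (0 - F v) ≤ 65 * Real.exp (-v) * n := by
    have hFv : 0 - F v = (v ^ 4 + 4 * v ^ 3 + 12 * v ^ 2 + 24 * v + 24) * Real.exp (-v) := by
      simp only [F]
      ring
    rw [hFv]
    have hEv : (0:ℝ) < Real.exp (-v) := Real.exp_pos _
    have h1 : n / v ^ 4 * ((v ^ 4 + 4 * v ^ 3 + 12 * v ^ 2 + 24 * v + 24) * Real.exp (-v))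
        ≤ n / v ^ 4 * (65 * v ^ 4 * Real.exp (-v)) := by
      apply mul_le_mul_of_nonneg_left _ (by positivity)
      apply mul_le_mul_of_nonneg_right hP hEv.le
    refine le_trans h1 (le_of_eq ?_)
    field_simp
  calc ∫ t in Set.Ioi v, Real.exp (-t) * ‖deriv φ ((t : ℝ) : ℂ)‖
      = ∫ t in Set.Ioi v, G t := rfl
    _ ≤ ∫ t in Set.Ioi v, n / v ^ 4 * (t ^ 4 * Real.exp (-t)) := hmono
    _ = n / v ^ 4 * (0 - F v) := hcalc
    _ ≤ 65 * Real.exp (-v) * n := hfinal
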